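/- Let 0 < q < 1, M > 0, r ∈ ℝ and t₀ > 0. Then there exist T ≥ t₀ and C > 0 such that for all t ≥ T, ∫_{t₀}^{t} ω^{r} · e^{(M/(1−q))·ω^{1−q}} dω ≤ C · (1 + t^{r+q} · e^{(M/(1−q))·t^{1−q}}). -/

import Mathlib

open Real Set Filter MeasureTheory
open scoped RealInnerProductSpace

noncomputable section

abbrev Euc (n : ℕ) : Type := EuclideanSpace ℝ (Fin n)

/-- The Lagrangian `L(x,y) = f(x) + ⟨Kx, y⟩ − g(y)`. -/
def Lag {n m : ℕ} (f : Euc n → ℝ) (g : Euc m → ℝ) (K : Euc n →L[ℝ] Euc m)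
    (x : Euc n) (y : Euc m) : ℝ :=
  f x + ⟪K x, y⟫ - g y

/-- The augmented Lagrangian `L_t(x,y) = L(x,y) + (c/(2 t^p)) (‖x‖² − ‖y‖²)`. -/
def LagT {n m : ℕ} (f : Euc n → ℝ) (g : Euc m → ℝ) (K : Euc n →L[ℝ] Euc m)
    (c p : ℝ) (t : ℝ) (x : Euc n) (y : Euc m) : ℝ :=
  Lag f g K x y + (c / (2 * t ^ p)) * (‖x‖ ^ 2 - ‖y‖ ^ 2)

/-- `∇_x L_t(x,y) = ∇f(x) + K* y + (c/t^p) x`. -/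
def gradLx {n m : ℕ} (f : Euc n → ℝ) (K : Euc n →L[ℝ] Euc m)
    (c p : ℝ) (t : ℝ) (x : Euc n) (y : Euc m) : Euc n :=
  gradient f x + (ContinuousLinearMap.adjoint K) y + (c / t ^ p) • x

/-- `∇_y L_t(x,y) = −∇g(y) + K x − (c/t^p) y`. -/
def gradLy {n m : ℕ} (g : Euc m → ℝ) (K : Euc n →L[ℝ] Euc m)
    (c p : ℝ) (t : ℝ) (x : Euc n) (y : Euc m) : Euc m :=
  -(gradient g y) + K x - (c / t ^ p) • y

/-- The extrapolation coefficient `θ(t)`. -/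
def theta (α q γ s t : ℝ) : ℝ :=
  (t ^ (2*q+s) - 2*γ*q * t ^ (2*q-1) + γ * t ^ q) /
    ((α - 1) * (t ^ (q+s) - γ*q * t ^ (q-1)))

/-- `(xs, ys)` is a saddle point of `L`. -/
def IsSaddle {n m : ℕ} (L : Euc n → Euc m → ℝ) (xs : Euc n) (ys : Euc m) : Prop :=
  ∀ x : Euc n, ∀ y : Euc m, L xs y ≤ L xs ys ∧ L xs ys ≤ L x ys

/-- A global solution of the dynamical system (dyn), recorded together with its first and
second derivatives `x', y', x'', y''` and the derivatives `Gx', Gy'` of the Hessian-driven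
damping terms `t ↦ ∇_x L_t(x(t), y(t)+θ(t) y'(t))` and `t ↦ ∇_y L_t(x(t)+θ(t) x'(t), y(t))`. -/
structure IsDynSol {n m : ℕ} (f : Euc n → ℝ) (g : Euc m → ℝ) (K : Euc n →L[ℝ] Euc m)
    (c p α q γ s t₀ : ℝ) (x : ℝ → Euc n) (y : ℝ → Euc m)
    (x' x'' Gx' : ℝ → Euc n) (y' y'' Gy' : ℝ → Euc m) : Prop where
  hx' : ∀ t ≥ t₀, HasDerivAt x (x' t) t
  hy' : ∀ t ≥ t₀, HasDerivAt y (y' t) t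
  hx'' : ∀ t ≥ t₀, HasDerivAt x' (x'' t) t
  hy'' : ∀ t ≥ t₀, HasDerivAt y' (y'' t) t
  hx''c : ContinuousOn x'' (Ici t₀)
  hy''c : ContinuousOn y'' (Ici t₀)
  hGx' : ∀ t ≥ t₀, HasDerivAt
    (fun τ => gradLx f K c p τ (x τ) (y τ + theta α q γ s τ • y' τ)) (Gx' t) t
  hGy' : ∀ t ≥ t₀, HasDerivAt
    (fun τ => gradLy g K c p τ (x τ + theta α q γ s τ • x' τ) (y τ)) (Gy' t) t
  heqx : ∀ t ≥ t₀, x'' t + (α / t ^ q) • x' t + γ • Gx' t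
      + t ^ s • gradLx f K c p t (x t) (y t + theta α q γ s t • y' t) = 0
  heqy : ∀ t ≥ t₀, y'' t + (α / t ^ q) • y' t - γ • Gy' t
      - t ^ s • gradLy g K c p t (x t + theta α q γ s t • x' t) (y t) = 0

/-- The coefficient `a(t)`. -/
def aFun (α q γ s t : ℝ) : ℝ :=
  (2*q+s) * t ^ (2*q+s-1) - 2*γ*q*(2*q-1) * t ^ (2*q-2) + γ*q * t ^ (q-1)
    + (α-1) * (γ*q * t ^ (q-1) - t ^ (q+s))

/-- The coefficient `l(t)` (depending on the constant `M`). -/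
def lFun (α q c γ s p M t : ℝ) : ℝ :=
  M*(α-1)*(3*α-2)/2 * t ^ (-q) + (α-1)*c*γ/8 * t ^ (-p)
    - M*(α-1)*q/2 * t ^ (-1 : ℝ) - (α-1)*c/4 * t ^ (q+s-p)
    + (α-1)*c*γ*q/4 * t ^ (q-1-p) - (α-1)*q*c/(8*α) * t ^ (2*q+s-1-p)
    + (α-1)*q*(1-q)/2 * t ^ (q-2)

/-- `Δ(t) = ‖∇_x L_t(x(t), y(t)+θ(t)ẏ(t))‖² + ‖∇_y L_t(x(t)+θ(t)ẋ(t), y(t))‖²`. -/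
def DeltaFun {n m : ℕ} (f : Euc n → ℝ) (g : Euc m → ℝ) (K : Euc n →L[ℝ] Euc m)
    (c p α q γ s : ℝ) (x x' : ℝ → Euc n) (y y' : ℝ → Euc m) (t : ℝ) : ℝ :=
  ‖gradLx f K c p t (x t) (y t + theta α q γ s t • y' t)‖ ^ 2
    + ‖gradLy g K c p t (x t + theta α q γ s t • x' t) (y t)‖ ^ 2

/-- The energy function `Ê(t)` of Lemma 4.1, built from the saddle points `(x_t, y_t)` of the
augmented Lagrangians. -/
def Ehat {n m : ℕ} (f : Euc n → ℝ) (g : Euc m → ℝ) (K : Euc n →L[ℝ] Euc m)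
    (c p α q γ s : ℝ) (xt x x' : ℝ → Euc n) (yt y y' : ℝ → Euc m) (t : ℝ) : ℝ :=
  (t ^ (2*q+s) - 2*γ*q * t ^ (2*q-1) + γ * t ^ q) *
      (LagT f g K c p t (x t) (yt t) - LagT f g K c p t (xt t) (y t))
    + (1/2) * ‖(α-1) • (x t - xt t)
        + t ^ q • (x' t + γ • gradLx f K c p t (x t) (y t + theta α q γ s t • y' t))‖ ^ 2
    + (α-1)/2 * (1 - q * t ^ (q-1)) * ‖x t - xt t‖ ^ 2
    + (1/2) * ‖(α-1) • (y t - yt t)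
        + t ^ q • (y' t - γ • gradLy g K c p t (x t + theta α q γ s t • x' t) (y t))‖ ^ 2
    + (α-1)/2 * (1 - q * t ^ (q-1)) * ‖y t - yt t‖ ^ 2

/-- The energy function `E(t)` of Theorem 3.1, built from a fixed saddle point `(xs, ys)` of `L`. -/
def Efun {n m : ℕ} (f : Euc n → ℝ) (g : Euc m → ℝ) (K : Euc n →L[ℝ] Euc m)
    (c p α q γ s : ℝ) (xs : Euc n) (ys : Euc m)
    (x x' : ℝ → Euc n) (y y' : ℝ → Euc m) (t : ℝ) : ℝ :=
  (t ^ (2*q+s) - 2*γ*q * t ^ (2*q-1) + γ * t ^ q) *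
      (Lag f g K (x t) ys - Lag f g K xs (y t) + c / (2 * t ^ p) * (‖x t‖ ^ 2 + ‖y t‖ ^ 2))
    + (1/2) * ‖(α-1) • (x t - xs)
        + t ^ q • (x' t + γ • gradLx f K c p t (x t) (y t + theta α q γ s t • y' t))‖ ^ 2
    + (α-1)/2 * (1 - q * t ^ (q-1)) * ‖x t - xs‖ ^ 2
    + (1/2) * ‖(α-1) • (y t - ys)
        + t ^ q • (y' t - γ • gradLy g K c p t (x t + theta α q γ s t • x' t) (y t))‖ ^ 2
    + (α-1)/2 * (1 - q * t ^ (q-1)) * ‖y t - ys‖ ^ 2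

/-- the integral estimate
`∫_{t₀}^t ω^r e^{(M/(1−q)) ω^{1−q}} dω ≤ C (1 + t^{r+q} e^{(M/(1−q)) t^{1−q}})`. -/
theorem stmt19 (q M r t₀ : ℝ) (hq0 : 0 < q) (hq1 : q < 1) (hM : 0 < M) (ht₀ : 0 < t₀) :
    ∃ T ≥ t₀, ∃ C > 0, ∀ t ≥ T,
      (∫ ω in t₀..t, ω ^ r * Real.exp (M / (1 - q) * ω ^ (1 - q))) ≤
        C * (1 + t ^ (r + q) * Real.exp (M / (1 - q) * t ^ (1 - q))) := by
  have h1q : (0:ℝ) < 1 - q := by linarith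
  set c : ℝ := M / (1 - q) with hc
  set g : ℝ → ℝ := fun ω => ω ^ r * Real.exp (c * ω ^ (1 - q)) with hg
  set F : ℝ → ℝ := fun ω => ω ^ (r + q) * Real.exp (c * ω ^ (1 - q)) with hFdef
  set F' : ℝ → ℝ := fun ω => ((r + q) * ω ^ (q - 1) + M) * (ω ^ r * Real.exp (c * ω ^ (1 - q)))
    with hF'def
  have hrpow : ∀ (e : ℝ), ContinuousOn (fun ω : ℝ => ω ^ e) (Set.Ioi 0) := fun e x hx =>
    (Real.continuousAt_rpow_const x e (Or.inl (ne_of_gt hx))).continuousWithinAt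
  have hgc : ContinuousOn g (Set.Ioi 0) :=
    (hrpow r).mul (Real.continuous_exp.comp_continuousOn (continuousOn_const.mul (hrpow (1-q))))
  have hF'c : ContinuousOn F' (Set.Ioi 0) :=
    ((continuousOn_const.mul (hrpow (q-1))).add continuousOn_const).mul hgc
  have hderiv : ∀ ω : ℝ, 0 < ω → HasDerivAt F (F' ω) ω := by
    intro ω hω
    have h1 : HasDerivAt (fun ω : ℝ => ω ^ (r+q)) ((r+q) * ω ^ (r+q-1)) ω :=
      Real.hasDerivAt_rpow_const (Or.inl hω.ne')
    have h2 : HasDerivAt (fun ω : ℝ => c * ω ^ (1-q)) (c * ((1-q) * ω ^ (1-q-1))) ω :=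
      (Real.hasDerivAt_rpow_const (Or.inl hω.ne')).const_mul c
    have h3 := h2.exp
    have h4 : HasDerivAt F _ ω := h1.mul h3
    convert h4 using 1
    have e1 : ω ^ (r+q-1) = ω ^ r * ω ^ (q-1) := by
      rw [← Real.rpow_add hω]; ring_nf
    have e2 : ω ^ (r+q) * ω ^ (1-q-1) = ω ^ r := by
      rw [← Real.rpow_add hω]; ring_nf
    have e3 : c * (1 - q) = M := by rw [hc, div_mul_cancel₀ M h1q.ne']
    simp only [hF'def]
    rw [e1]
    have e4 : ω ^ (r+q) * (Real.exp (c * ω ^ (1-q)) * (c * ((1-q) * ω ^ (1-q-1))))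
        = M * (ω ^ r * Real.exp (c * ω ^ (1-q))) := by
      calc ω ^ (r+q) * (Real.exp (c * ω ^ (1-q)) * (c * ((1-q) * ω ^ (1-q-1))))
          = (c * (1-q)) * (ω ^ (r+q) * ω ^ (1-q-1)) * Real.exp (c * ω ^ (1-q)) := by ring
        _ = M * (ω ^ r * Real.exp (c * ω ^ (1-q))) := by rw [e3, e2]; ring
    rw [e4]; ring
  set B : ℝ := 2 * (|r + q| + 1) / M with hB
  have hBpos : 0 < B := by positivity
  set T := max t₀ (max 1 (B ^ (1 - q)⁻¹)) with hT
  have hTt₀ : t₀ ≤ T := le_max_left _ _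
  have hT1 : (1:ℝ) ≤ T := le_trans (le_max_left 1 _) (le_max_right _ _)
  have hTpos : 0 < T := lt_of_lt_of_le one_pos hT1
  have hTB : B ^ (1 - q)⁻¹ ≤ T := le_trans (le_max_right 1 _) (le_max_right _ _)
  have hbound : ∀ ω, T ≤ ω → M / 2 * g ω ≤ F' ω := by
    intro ω hω
    have hωpos : 0 < ω := lt_of_lt_of_le hTpos hω
    have h1 : B ≤ ω ^ (1 - q) := by
      calc B = (B ^ (1-q)⁻¹) ^ (1-q) := by
              rw [← Real.rpow_mul hBpos.le, inv_mul_cancel₀ h1q.ne', Real.rpow_one]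
        _ ≤ ω ^ (1-q) :=
          Real.rpow_le_rpow (Real.rpow_nonneg hBpos.le _) (le_trans hTB hω) h1q.le
    have h2 : ω ^ (q - 1) ≤ B⁻¹ := by
      have : ω ^ (q-1) = (ω ^ (1-q))⁻¹ := by
        rw [show q - 1 = -(1-q) by ring, Real.rpow_neg hωpos.le]
      rw [this]
      exact inv_anti₀ hBpos h1
    have h3 : 0 ≤ ω ^ (q - 1) := Real.rpow_nonneg hωpos.le _
    have h4 : |r + q| * ω ^ (q-1) ≤ M / 2 := by
      have : (|r+q|+1) * B⁻¹ = M / 2 := by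
        rw [hB]; field_simp
      calc |r+q| * ω ^ (q-1) ≤ (|r+q|+1) * B⁻¹ := by
            apply mul_le_mul (by linarith [abs_nonneg (r+q)]) h2 h3 (by positivity)
        _ = M / 2 := this
    have h5 : M / 2 ≤ (r + q) * ω ^ (q - 1) + M := by
      have := neg_abs_le (r + q)
      nlinarith [mul_le_mul_of_nonneg_right this h3]
    have hgnn : 0 ≤ g ω := mul_nonneg (Real.rpow_nonneg hωpos.le _) (Real.exp_pos _).le
    calc M / 2 * g ω ≤ ((r+q) * ω ^ (q-1) + M) * g ω :=
          mul_le_mul_of_nonneg_right h5 hgnn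
      _ = F' ω := rfl
  have hA : 0 ≤ ∫ ω in t₀..T, g ω := by
    apply intervalIntegral.integral_nonneg hTt₀
    intro ω hω
    exact mul_nonneg (Real.rpow_nonneg (le_trans ht₀.le hω.1) _) (Real.exp_pos _).le
  refine ⟨T, hTt₀, (∫ ω in t₀..T, g ω) + 2 / M + 1, by positivity, ?_⟩
  intro t ht
  have htpos : 0 < t := lt_of_lt_of_le hTpos ht
  have hsub1 : Set.uIcc t₀ T ⊆ Set.Ioi 0 := by
    rw [Set.uIcc_of_le hTt₀]; exact fun x hx => lt_of_lt_of_le ht₀ hx.1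
  have hsub2 : Set.uIcc T t ⊆ Set.Ioi 0 := by
    rw [Set.uIcc_of_le ht]; exact fun x hx => lt_of_lt_of_le hTpos hx.1
  have hi1 : IntervalIntegrable g MeasureTheory.volume t₀ T :=
    (hgc.mono hsub1).intervalIntegrable
  have hi2 : IntervalIntegrable g MeasureTheory.volume T t :=
    (hgc.mono hsub2).intervalIntegrable
  have hi3 : IntervalIntegrable F' MeasureTheory.volume T t :=
    (hF'c.mono hsub2).intervalIntegrable
  have hftc : ∫ ω in T..t, F' ω = F t - F T :=
    intervalIntegral.integral_eq_sub_of_hasDerivAt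
      (fun ω hω => hderiv ω (hsub2 hω)) hi3
  have hmono : (∫ ω in T..t, g ω) ≤ ∫ ω in T..t, 2 / M * F' ω := by
    apply intervalIntegral.integral_mono_on ht hi2 (hi3.const_mul _)
    intro ω hω
    have h := hbound ω hω.1
    calc g ω = 2 / M * (M / 2 * g ω) := by field_simp
      _ ≤ 2 / M * F' ω := mul_le_mul_of_nonneg_left h (by positivity)
  have hint2 : (∫ ω in T..t, 2 / M * F' ω) = 2 / M * (F t - F T) := by
    rw [intervalIntegral.integral_const_mul, hftc]
  have hsplit : (∫ ω in t₀..T, g ω) + (∫ ω in T..t, g ω) = ∫ ω in t₀..t, g ω :=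
    intervalIntegral.integral_add_adjacent_intervals hi1 hi2
  have hFTnn : 0 ≤ F T := mul_nonneg (Real.rpow_nonneg hTpos.le _) (Real.exp_pos _).le
  have hFtnn : 0 ≤ F t := mul_nonneg (Real.rpow_nonneg htpos.le _) (Real.exp_pos _).le
  have key : (∫ ω in t₀..t, g ω) ≤ (∫ ω in t₀..T, g ω) + 2 / M * F t := by
    rw [← hsplit]
    have : (∫ ω in T..t, g ω) ≤ 2 / M * F t := by
      calc (∫ ω in T..t, g ω) ≤ 2 / M * (F t - F T) := hmono.trans hint2.le
        _ ≤ 2 / M * F t := by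
            nlinarith [mul_nonneg (by positivity : (0:ℝ) ≤ 2 / M) hFTnn]
    linarith
  calc (∫ ω in t₀..t, ω ^ r * Real.exp (M / (1 - q) * ω ^ (1 - q)))
      = ∫ ω in t₀..t, g ω := rfl
    _ ≤ (∫ ω in t₀..T, g ω) + 2 / M * F t := key
    _ ≤ ((∫ ω in t₀..T, g ω) + 2 / M + 1) * (1 + t ^ (r + q) * Real.exp (M / (1 - q) * t ^ (1 - q))) := by
        have hFt : F t = t ^ (r + q) * Real.exp (M / (1 - q) * t ^ (1 - q)) := rfl
        rw [← hFt]
        nlinarith [hA, hFtnn, mul_nonneg hA hFtnn, (by positivity : (0:ℝ) ≤ 2 / M)]
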